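/- For every integer k ≥ 4, the thin headless spider H_k satisfies γ^F(H_k) = 2k − 2. -/

import Mathlib

open Finset

namespace SepDom

variable {V : Type*} [Fintype V] [DecidableEq V]

/-- The closed neighborhood `N[v]` of a vertex as a `Finset`. -/
def closedNbhd (G : SimpleGraph V) [DecidableRel G.Adj] (v : V) : Finset V :=
  insert v (G.neighborFinset v)

/-- `C` is a dominating set: `N[v] ∩ C ≠ ∅` for all `v`. -/
def IsDomSet (G : SimpleGraph V) [DecidableRel G.Adj] (C : Finset V) : Prop :=
  ∀ v : V, (closedNbhd G v ∩ C).Nonempty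

/-- `C` is a total-dominating set: `N(v) ∩ C ≠ ∅` for all `v`. -/
def IsTotalDomSet (G : SimpleGraph V) [DecidableRel G.Adj] (C : Finset V) : Prop :=
  ∀ v : V, (G.neighborFinset v ∩ C).Nonempty

/-- `C` is a locating set (L-set): the sets `N(v) ∩ C`, `v ∉ C`, are pairwise distinct. -/
def IsLSet (G : SimpleGraph V) [DecidableRel G.Adj] (C : Finset V) : Prop :=
  ∀ u ∉ C, ∀ v ∉ C, G.neighborFinset u ∩ C = G.neighborFinset v ∩ C → u = v

/-- `C` is an open-separating set (O-set): the sets `N(v) ∩ C` are pairwise distinct. -/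
def IsOSet (G : SimpleGraph V) [DecidableRel G.Adj] (C : Finset V) : Prop :=
  ∀ u v : V, G.neighborFinset u ∩ C = G.neighborFinset v ∩ C → u = v

/-- `C` is a closed-separating set (I-set): the sets `N[v] ∩ C` are pairwise distinct. -/
def IsISet (G : SimpleGraph V) [DecidableRel G.Adj] (C : Finset V) : Prop :=
  ∀ u v : V, closedNbhd G u ∩ C = closedNbhd G v ∩ C → u = v

/-- `C` is a full-separating set (F-set): both open- and closed-separating. -/
def IsFSet (G : SimpleGraph V) [DecidableRel G.Adj] (C : Finset V) : Prop :=
  IsOSet G C ∧ IsISet G C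

/-- `G` has open twins: distinct non-adjacent vertices with equal open neighborhoods. -/
def HasOpenTwins (G : SimpleGraph V) [DecidableRel G.Adj] : Prop :=
  ∃ u v : V, u ≠ v ∧ ¬ G.Adj u v ∧ G.neighborFinset u = G.neighborFinset v

/-- `G` has closed twins: distinct adjacent vertices with equal closed neighborhoods. -/
def HasClosedTwins (G : SimpleGraph V) [DecidableRel G.Adj] : Prop :=
  ∃ u v : V, u ≠ v ∧ G.Adj u v ∧ closedNbhd G u = closedNbhd G v

/-- `G` has an isolated vertex: a vertex with empty open neighborhood. -/
def HasIsolated (G : SimpleGraph V) [DecidableRel G.Adj] : Prop :=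
  ∃ v : V, G.neighborFinset v = ∅

/-- The L-number: minimum cardinality of an L-set. -/
noncomputable def lNum (G : SimpleGraph V) [DecidableRel G.Adj] : ℕ :=
  sInf {n | ∃ C : Finset V, IsLSet G C ∧ C.card = n}

/-- The O-number: minimum cardinality of an O-set. -/
noncomputable def oNum (G : SimpleGraph V) [DecidableRel G.Adj] : ℕ :=
  sInf {n | ∃ C : Finset V, IsOSet G C ∧ C.card = n}

/-- The I-number: minimum cardinality of an I-set. -/
noncomputable def iNum (G : SimpleGraph V) [DecidableRel G.Adj] : ℕ :=
  sInf {n | ∃ C : Finset V, IsISet G C ∧ C.card = n}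

/-- The F-number: minimum cardinality of an F-set. -/
noncomputable def fNum (G : SimpleGraph V) [DecidableRel G.Adj] : ℕ :=
  sInf {n | ∃ C : Finset V, IsFSet G C ∧ C.card = n}

/-- The LD-number: minimum cardinality of an LD-code. -/
noncomputable def ldNum (G : SimpleGraph V) [DecidableRel G.Adj] : ℕ :=
  sInf {n | ∃ C : Finset V, IsDomSet G C ∧ IsLSet G C ∧ C.card = n}

/-- The OD-number: minimum cardinality of an OD-code. -/
noncomputable def odNum (G : SimpleGraph V) [DecidableRel G.Adj] : ℕ :=
  sInf {n | ∃ C : Finset V, IsDomSet G C ∧ IsOSet G C ∧ C.card = n}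

/-- The ID-number: minimum cardinality of an ID-code. -/
noncomputable def idNum (G : SimpleGraph V) [DecidableRel G.Adj] : ℕ :=
  sInf {n | ∃ C : Finset V, IsDomSet G C ∧ IsISet G C ∧ C.card = n}

/-- The FD-number: minimum cardinality of an FD-code. -/
noncomputable def fdNum (G : SimpleGraph V) [DecidableRel G.Adj] : ℕ :=
  sInf {n | ∃ C : Finset V, IsDomSet G C ∧ IsFSet G C ∧ C.card = n}

/-- The LTD-number: minimum cardinality of an LTD-code. -/
noncomputable def ltdNum (G : SimpleGraph V) [DecidableRel G.Adj] : ℕ :=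
  sInf {n | ∃ C : Finset V, IsTotalDomSet G C ∧ IsLSet G C ∧ C.card = n}

/-- The OTD-number: minimum cardinality of an OTD-code. -/
noncomputable def otdNum (G : SimpleGraph V) [DecidableRel G.Adj] : ℕ :=
  sInf {n | ∃ C : Finset V, IsTotalDomSet G C ∧ IsOSet G C ∧ C.card = n}

/-- The ITD-number: minimum cardinality of an ITD-code. -/
noncomputable def itdNum (G : SimpleGraph V) [DecidableRel G.Adj] : ℕ :=
  sInf {n | ∃ C : Finset V, IsTotalDomSet G C ∧ IsISet G C ∧ C.card = n}

/-- The FTD-number: minimum cardinality of an FTD-code. -/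
noncomputable def ftdNum (G : SimpleGraph V) [DecidableRel G.Adj] : ℕ :=
  sInf {n | ∃ C : Finset V, IsTotalDomSet G C ∧ IsFSet G C ∧ C.card = n}

end SepDom

open SepDom

/-- The thin headless spider `H_k`: vertices `Sum.inl i` form the clique `Q`,
vertices `Sum.inr i` form the stable set `S`, and `q_i` is adjacent to `s_j` iff `i = j`. -/
def thinSpider (k : ℕ) : SimpleGraph (Fin k ⊕ Fin k) where
  Adj u v :=
    match u, v with
    | Sum.inl i, Sum.inl j => i ≠ j
    | Sum.inl i, Sum.inr j => i = j
    | Sum.inr i, Sum.inl j => i = j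
    | Sum.inr _, Sum.inr _ => False
  symm := by
    constructor
    rintro (i | i) (j | j) h
    · exact Ne.symm h
    · exact Eq.symm h
    · exact Eq.symm h
    · exact h
  loopless := by
    constructor
    rintro (i | i) h
    · exact h rfl
    · exact h

instance thinSpider.adjDecidable (k : ℕ) : DecidableRel (thinSpider k).Adj := by
  rintro (i | i) (j | j)
  · exact inferInstanceAs (Decidable (i ≠ j))
  · exact inferInstanceAs (Decidable (i = j))
  · exact inferInstanceAs (Decidable (i = j))
  · exact inferInstanceAs (Decidable False)


lemma thinSpider_adj_ll {k : ℕ} (i j : Fin k) :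
    (thinSpider k).Adj (Sum.inl i) (Sum.inl j) ↔ i ≠ j := Iff.rfl

lemma thinSpider_adj_lr {k : ℕ} (i j : Fin k) :
    (thinSpider k).Adj (Sum.inl i) (Sum.inr j) ↔ i = j := Iff.rfl

lemma thinSpider_adj_rl {k : ℕ} (i j : Fin k) :
    (thinSpider k).Adj (Sum.inr i) (Sum.inl j) ↔ i = j := Iff.rfl

lemma thinSpider_adj_rr {k : ℕ} (i j : Fin k) :
    (thinSpider k).Adj (Sum.inr i) (Sum.inr j) ↔ False := Iff.rfl

lemma exists_ne3 {k : ℕ} (hk : 4 ≤ k) (a b c : Fin k) :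
    ∃ m : Fin k, m ≠ a ∧ m ≠ b ∧ m ≠ c := by
  by_contra h
  push_neg at h
  have hsub : (Finset.univ : Finset (Fin k)) ⊆ {a, b, c} := by
    intro m _
    simp only [Finset.mem_insert, Finset.mem_singleton]
    rcases eq_or_ne m a with h1 | h1
    · exact Or.inl h1
    rcases eq_or_ne m b with h2 | h2
    · exact Or.inr (Or.inl h2)
    exact Or.inr (Or.inr (h m h1 h2))
  have h1 := Finset.card_le_card hsub
  have h3 : ({a, b, c} : Finset (Fin k)).card ≤ 3 := by
    apply (Finset.card_insert_le _ _).trans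
    apply Nat.succ_le_succ
    apply (Finset.card_insert_le _ _).trans
    simp
  simp [Finset.card_univ] at h1
  omega

lemma spider_upper (k : ℕ) (hk : 4 ≤ k) :
    ∃ C : Finset (Fin k ⊕ Fin k), IsFSet (thinSpider k) C ∧ C.card = 2 * k - 2 := by
  haveI : NeZero k := ⟨by omega⟩
  refine ⟨Finset.univ \ {Sum.inl 0, Sum.inr 0}, ⟨?_, ?_⟩, ?_⟩
  · -- open separating
    rintro (i | i) (j | j) h
    · -- inl inl
      rcases eq_or_ne i 0 with rfl | hi
      · rcases eq_or_ne j 0 with rfl | hj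
        · rfl
        · have hw := Finset.ext_iff.mp h (Sum.inr j)
          simp [SimpleGraph.mem_neighborFinset, thinSpider_adj_ll, thinSpider_adj_lr, thinSpider_adj_rl, thinSpider_adj_rr, hj] at hw
          all_goals first | exact congrArg Sum.inl hw | exact congrArg Sum.inl hw.symm
      · have hw := Finset.ext_iff.mp h (Sum.inr i)
        simp [SimpleGraph.mem_neighborFinset, thinSpider_adj_ll, thinSpider_adj_lr, thinSpider_adj_rl, thinSpider_adj_rr, hi] at hw
        all_goals first | exact congrArg Sum.inl hw | exact congrArg Sum.inl hw.symm
    · -- inl inr : impossible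
      obtain ⟨m, hm0, hmi, hmj⟩ := exists_ne3 hk 0 i j
      have hw := Finset.ext_iff.mp h (Sum.inl m)
      simp [SimpleGraph.mem_neighborFinset, thinSpider_adj_ll, thinSpider_adj_lr, thinSpider_adj_rl, thinSpider_adj_rr, hm0, Ne.symm hmi] at hw
      first | exact absurd hw hmj | exact absurd hw.symm hmj | exact hmj hw | exact hmj hw.symm
    · -- inr inl : impossible
      obtain ⟨m, hm0, hmi, hmj⟩ := exists_ne3 hk 0 j i
      have hw := Finset.ext_iff.mp h (Sum.inl m)
      simp [SimpleGraph.mem_neighborFinset, thinSpider_adj_ll, thinSpider_adj_lr, thinSpider_adj_rl, thinSpider_adj_rr, hm0, Ne.symm hmi] at hw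
      first | exact absurd hw hmj | exact absurd hw.symm hmj | exact hmj hw | exact hmj hw.symm
    · -- inr inr
      rcases eq_or_ne i 0 with rfl | hi
      · rcases eq_or_ne j 0 with rfl | hj
        · rfl
        · have hw := Finset.ext_iff.mp h (Sum.inl j)
          simp [SimpleGraph.mem_neighborFinset, thinSpider_adj_ll, thinSpider_adj_lr, thinSpider_adj_rl, thinSpider_adj_rr, hj] at hw
          all_goals first | exact congrArg Sum.inr hw | exact congrArg Sum.inr hw.symm
      · have hw := Finset.ext_iff.mp h (Sum.inl i)
        simp [SimpleGraph.mem_neighborFinset, thinSpider_adj_ll, thinSpider_adj_lr, thinSpider_adj_rl, thinSpider_adj_rr, hi] at hw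
        all_goals first | exact congrArg Sum.inr hw | exact congrArg Sum.inr hw.symm
  · -- closed separating
    rintro (i | i) (j | j) h
    · rcases eq_or_ne i 0 with rfl | hi
      · rcases eq_or_ne j 0 with rfl | hj
        · rfl
        · have hw := Finset.ext_iff.mp h (Sum.inr j)
          simp [closedNbhd, SimpleGraph.mem_neighborFinset, thinSpider_adj_ll, thinSpider_adj_lr, thinSpider_adj_rl, thinSpider_adj_rr, hj] at hw
          all_goals first | exact congrArg Sum.inl hw | exact congrArg Sum.inl hw.symm
      · have hw := Finset.ext_iff.mp h (Sum.inr i)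
        simp [closedNbhd, SimpleGraph.mem_neighborFinset, thinSpider_adj_ll, thinSpider_adj_lr, thinSpider_adj_rl, thinSpider_adj_rr, hi] at hw
        all_goals first | exact congrArg Sum.inl hw | exact congrArg Sum.inl hw.symm
    · obtain ⟨m, hm0, hmj, -⟩ := exists_ne3 hk 0 j j
      have hw := Finset.ext_iff.mp h (Sum.inl m)
      simp [closedNbhd, SimpleGraph.mem_neighborFinset, thinSpider_adj_ll, thinSpider_adj_lr, thinSpider_adj_rl, thinSpider_adj_rr, hm0] at hw
      have h1 := hw.mp (by tauto)
      first | exact absurd h1 hmj | exact absurd h1.symm hmj | exact hmj h1 | exact hmj h1.symm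
    · obtain ⟨m, hm0, hmj, -⟩ := exists_ne3 hk 0 i i
      have hw := Finset.ext_iff.mp h (Sum.inl m)
      simp [closedNbhd, SimpleGraph.mem_neighborFinset, thinSpider_adj_ll, thinSpider_adj_lr, thinSpider_adj_rl, thinSpider_adj_rr, hm0] at hw
      have h1 := hw.mpr (by tauto)
      first | exact absurd h1 hmj | exact absurd h1.symm hmj | exact hmj h1 | exact hmj h1.symm
    · rcases eq_or_ne i 0 with rfl | hi
      · rcases eq_or_ne j 0 with rfl | hj
        · rfl
        · have hw := Finset.ext_iff.mp h (Sum.inr j)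
          simp [closedNbhd, SimpleGraph.mem_neighborFinset, thinSpider_adj_ll, thinSpider_adj_lr, thinSpider_adj_rl, thinSpider_adj_rr, hj] at hw
          all_goals first | exact congrArg Sum.inr hw | exact congrArg Sum.inr hw.symm
      · have hw := Finset.ext_iff.mp h (Sum.inr i)
        simp [closedNbhd, SimpleGraph.mem_neighborFinset, thinSpider_adj_ll, thinSpider_adj_lr, thinSpider_adj_rl, thinSpider_adj_rr, hi] at hw
        all_goals first | exact congrArg Sum.inr hw | exact congrArg Sum.inr hw.symm
  · -- cardinality
    rw [Finset.card_sdiff_of_subset (Finset.subset_univ _)]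
    have h2 : ({Sum.inl 0, Sum.inr 0} : Finset (Fin k ⊕ Fin k)).card = 2 := by
      rw [Finset.card_insert_of_notMem (by simp), Finset.card_singleton]
    have hu : (Finset.univ : Finset (Fin k ⊕ Fin k)).card = k + k := by
      simp [Finset.card_univ]
    omega

lemma spider_lower (k : ℕ) (hk : 4 ≤ k) (C : Finset (Fin k ⊕ Fin k))
    (h : IsFSet (thinSpider k) C) : 2 * k - 2 ≤ C.card := by
  obtain ⟨hO, hI⟩ := h
  set D := (Finset.univ : Finset (Fin k ⊕ Fin k)) \ C with hD
  have hleft : (D.filter (fun x => x.isLeft)).card ≤ 1 := by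
    rw [Finset.card_le_one]
    rintro (i | i) ha (j | j) hb
    · simp only [hD, Finset.mem_filter, Finset.mem_sdiff, Finset.mem_univ, true_and] at ha hb
      have e1 : (thinSpider k).neighborFinset (Sum.inr i) ∩ C = ∅ := by
        apply Finset.eq_empty_iff_forall_notMem.mpr
        rintro (m | m) hw <;>
          simp [SimpleGraph.mem_neighborFinset, thinSpider_adj_ll, thinSpider_adj_lr, thinSpider_adj_rl, thinSpider_adj_rr] at hw
        obtain ⟨rfl, hm⟩ := hw
        exact ha.1 hm
      have e2 : (thinSpider k).neighborFinset (Sum.inr j) ∩ C = ∅ := by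
        apply Finset.eq_empty_iff_forall_notMem.mpr
        rintro (m | m) hw <;>
          simp [SimpleGraph.mem_neighborFinset, thinSpider_adj_ll, thinSpider_adj_lr, thinSpider_adj_rl, thinSpider_adj_rr] at hw
        obtain ⟨rfl, hm⟩ := hw
        exact hb.1 hm
      have := hO (Sum.inr i) (Sum.inr j) (by rw [e1, e2])
      simpa using this
    · simp at hb
    · simp at ha
    · simp at ha
  have hright : (D.filter (fun x => ¬ x.isLeft)).card ≤ 1 := by
    rw [Finset.card_le_one]
    rintro (i | i) ha (j | j) hb
    · simp at ha
    · simp at ha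
    · simp at hb
    · simp only [hD, Finset.mem_filter, Finset.mem_sdiff, Finset.mem_univ, true_and] at ha hb
      have e : closedNbhd (thinSpider k) (Sum.inl i) ∩ C
          = closedNbhd (thinSpider k) (Sum.inl j) ∩ C := by
        ext w
        rcases w with m | m <;>
          simp only [Finset.mem_inter, closedNbhd, Finset.mem_insert,
            SimpleGraph.mem_neighborFinset, thinSpider_adj_ll, thinSpider_adj_lr, thinSpider_adj_rl, thinSpider_adj_rr]
        · constructor
          · rintro ⟨-, hm⟩
            refine ⟨?_, hm⟩
            rcases eq_or_ne m j with rfl | hmj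
            · exact Or.inl rfl
            · exact Or.inr (by simpa [eq_comm] using hmj)
          · rintro ⟨-, hm⟩
            refine ⟨?_, hm⟩
            rcases eq_or_ne m i with rfl | hmi
            · exact Or.inl rfl
            · exact Or.inr (by simpa [eq_comm] using hmi)
        · constructor
          · rintro ⟨h1, hm⟩
            exfalso
            rcases h1 with h1 | h1
            · exact Sum.inl_ne_inr h1.symm
            · subst h1; exact ha.1 hm
          · rintro ⟨h1, hm⟩
            exfalso
            rcases h1 with h1 | h1
            · exact Sum.inl_ne_inr h1.symm
            · subst h1; exact hb.1 hm
      have := hI (Sum.inl i) (Sum.inl j) e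
      simpa using this
  have hsplit := Finset.card_filter_add_card_filter_not
    (s := D) (p := fun x => x.isLeft = true)
  have hDcard : D.card = (k + k) - C.card := by
    rw [hD, Finset.card_sdiff_of_subset (Finset.subset_univ _)]
    simp [Finset.card_univ]
  have hCle : C.card ≤ k + k := by
    have := Finset.card_le_card (Finset.subset_univ C)
    simpa [Finset.card_univ] using this
  have hD2 : D.card ≤ 2 := by
    have : (D.filter (fun x => x.isLeft = true)).card ≤ 1 := by
      convert hleft using 2
    omega
  omega

theorem thinSpider_fNum (k : ℕ) (hk : 4 ≤ k) :
    fNum (thinSpider k) = 2 * k - 2 := by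
  obtain ⟨C, hC, hcard⟩ := spider_upper k hk
  apply le_antisymm
  · exact Nat.sInf_le ⟨C, hC, hcard⟩
  · refine le_csInf ⟨2 * k - 2, C, hC, hcard⟩ ?_
    rintro n ⟨D, hD, rfl⟩
    exact spider_lower k hk D hD
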